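/- Let f : ℝ³ → ℝ be nonnegative, measurable, with ∫ f dv = ρ > 0, define U = (1/ρ)∫ v f dv and T = (1/(3ρ))∫ |v − U|² f dv, and suppose N_0 := sup_v f(v) < ∞. Then ρ / T^{3/2} ≤ C N_0 for a universal constant C > 0; equivalently, the density is bounded by a constant times the supremum of f times the temperature to the power 3/2. -/

import Mathlib

open MeasureTheory Metric

/-- Estimate `ρ / T^{3/2} ≤ C N₀` for the macroscopic quantities of a nonnegative
distribution function `f` on `ℝ³` bounded by `N₀`. -/
theorem density_le_temperature_bound :
    ∃ C : ℝ, 0 < C ∧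
      ∀ (f : EuclideanSpace ℝ (Fin 3) → ℝ) (ρ N₀ T : ℝ)
        (U : EuclideanSpace ℝ (Fin 3)),
        Measurable f → (∀ v, 0 ≤ f v) →
        Integrable f volume →
        Integrable (fun v => f v • v) volume →
        Integrable (fun v => f v * ‖v‖ ^ 2) volume →
        (∫ v, f v) = ρ → 0 < ρ →
        U = ρ⁻¹ • ∫ v, f v • v →
        T = (3 * ρ)⁻¹ * ∫ v, f v * ‖v - U‖ ^ 2 → 0 < T →
        (∀ v, f v ≤ N₀) →
        ρ / T ^ ((3 : ℝ) / 2) ≤ C * N₀ := by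
  set V₁ : ℝ := (volume (ball (0 : EuclideanSpace ℝ (Fin 3)) 1)).toReal with hV₁
  have hV₁pos : 0 < V₁ := by
    rw [hV₁]
    exact ENNReal.toReal_pos (measure_ball_pos volume _ one_pos).ne' measure_ball_lt_top.ne
  refine ⟨2 * 6 ^ ((3 : ℝ) / 2) * V₁, by positivity, ?_⟩
  intro f ρ N₀ T U hf hf0 hint hint1 hint2 hρ hρpos hU hT hTpos hN₀
  have hN0 : 0 ≤ N₀ := le_trans (hf0 0) (hN₀ 0)
  set R : ℝ := Real.sqrt (6 * T) with hRdef
  have h6T : (0:ℝ) < 6 * T := by linarith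
  have hRpos : 0 < R := Real.sqrt_pos.mpr h6T
  have hR2 : R ^ 2 = 6 * T := Real.sq_sqrt h6T.le
  -- integrability of f v * ‖v - U‖²
  have hintU : Integrable (fun v => f v * ‖v - U‖ ^ 2) volume := by
    have hmeas : Measurable fun v => f v * ‖v - U‖ ^ 2 :=
      hf.mul (((measurable_id.sub_const U).norm).pow_const 2)
    refine ((hint2.const_mul 2).add (hint.const_mul (2 * ‖U‖ ^ 2))).mono'
      hmeas.aestronglyMeasurable ?_
    filter_upwards with v
    have h1 : ‖v - U‖ ^ 2 ≤ 2 * ‖v‖ ^ 2 + 2 * ‖U‖ ^ 2 := by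
      have h2 := norm_sub_le v U
      nlinarith [pow_le_pow_left₀ (norm_nonneg (v - U)) h2 2, sq_nonneg (‖v‖ - ‖U‖)]
    have h0 := hf0 v
    rw [Real.norm_eq_abs, abs_of_nonneg (by positivity)]
    have : f v * ‖v - U‖ ^ 2 ≤ f v * (2 * ‖v‖ ^ 2 + 2 * ‖U‖ ^ 2) := by nlinarith
    calc f v * ‖v - U‖ ^ 2 ≤ f v * (2 * ‖v‖ ^ 2 + 2 * ‖U‖ ^ 2) := this
      _ = 2 * (f v * ‖v‖ ^ 2) + 2 * ‖U‖ ^ 2 * f v := by ring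
  have hIval : (∫ v, f v * ‖v - U‖ ^ 2) = 3 * ρ * T := by
    have h3ρ : (3 * ρ) ≠ 0 := by positivity
    field_simp at hT
    linarith
  set s : Set (EuclideanSpace ℝ (Fin 3)) := ball U R with hs
  have hsm : MeasurableSet s := measurableSet_ball
  have hsplit : (∫ v in s, f v) + ∫ v in sᶜ, f v = ρ := by
    rw [integral_add_compl hsm hint, hρ]
  -- bound on the ball
  have hvol : (volume s).toReal = R ^ 3 * V₁ := by
    rw [hs, Measure.addHaar_ball volume U hRpos.le]
    rw [ENNReal.toReal_mul, ENNReal.toReal_ofReal (by positivity)]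
    norm_num [hV₁]
  have h1 : (∫ v in s, f v) ≤ N₀ * (R ^ 3 * V₁) := by
    calc (∫ v in s, f v) ≤ ∫ v in s, N₀ :=
          setIntegral_mono_on hint.integrableOn
            (integrableOn_const measure_ball_lt_top.ne) hsm (fun v _ => hN₀ v)
      _ = (volume s).toReal * N₀ := by rw [setIntegral_const]; simp [mul_comm, Measure.real]
      _ = N₀ * (R ^ 3 * V₁) := by rw [hvol]; ring
  -- bound on the complement
  have h2 : (∫ v in sᶜ, f v) ≤ ρ / 2 := by
    have key : (∫ v in sᶜ, f v) ≤ ∫ v in sᶜ, (R ^ 2)⁻¹ * (f v * ‖v - U‖ ^ 2) := by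
      refine setIntegral_mono_on hint.integrableOn
        ((hintU.const_mul _).integrableOn) hsm.compl ?_
      intro v hv
      have hdist : R ≤ ‖v - U‖ := by
        have : ¬ dist v U < R := hv
        rw [dist_eq_norm] at this
        linarith [not_lt.mp this]
      have h0 := hf0 v
      have hsq : R ^ 2 ≤ ‖v - U‖ ^ 2 := pow_le_pow_left₀ hRpos.le hdist 2
      have hR2pos : (0:ℝ) < R ^ 2 := pow_pos hRpos 2
      calc f v = (R ^ 2)⁻¹ * (f v * R ^ 2) := by field_simp
        _ ≤ (R ^ 2)⁻¹ * (f v * ‖v - U‖ ^ 2) :=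
            mul_le_mul_of_nonneg_left (mul_le_mul_of_nonneg_left hsq h0)
              (inv_nonneg.mpr hR2pos.le)
    have key2 : (∫ v in sᶜ, f v * ‖v - U‖ ^ 2) ≤ 3 * ρ * T := by
      rw [← hIval]
      exact setIntegral_le_integral hintU
        (Filter.Eventually.of_forall fun v => mul_nonneg (hf0 v) (sq_nonneg _))
    calc (∫ v in sᶜ, f v) ≤ ∫ v in sᶜ, (R ^ 2)⁻¹ * (f v * ‖v - U‖ ^ 2) := key
      _ = (R ^ 2)⁻¹ * ∫ v in sᶜ, f v * ‖v - U‖ ^ 2 := integral_const_mul _ _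
      _ ≤ (R ^ 2)⁻¹ * (3 * ρ * T) := by
          refine mul_le_mul_of_nonneg_left key2 (inv_nonneg.mpr (pow_nonneg hRpos.le 2))
      _ = ρ / 2 := by rw [hR2]; field_simp; ring
  -- combine
  have hmain : ρ / 2 ≤ N₀ * (R ^ 3 * V₁) := by linarith
  have hR3 : R ^ 3 = 6 ^ ((3:ℝ)/2) * T ^ ((3:ℝ)/2) := by
    rw [hRdef, Real.sqrt_eq_rpow, ← Real.rpow_natCast (_ ^ _) 3,
      ← Real.rpow_mul h6T.le]
    norm_num
    rw [Real.mul_rpow (by norm_num) hTpos.le]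
  have hTpow : (0:ℝ) < T ^ ((3:ℝ)/2) := Real.rpow_pos_of_pos hTpos _
  rw [div_le_iff₀ hTpow]
  rw [hR3] at hmain
  nlinarith [Real.rpow_pos_of_pos (show (0:ℝ) < 6 by norm_num) ((3:ℝ)/2)]
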